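/- For any triangle, the blue, red, and green values of Archimedes' function on its colored quadrances satisfy A(Q1ᵇ,Q2ᵇ,Q3ᵇ) = −A(Q1ʳ,Q2ʳ,Q3ʳ) = −A(Q1ᵍ,Q2ᵍ,Q3ᵍ), i.e., the blue value equals minus the red value and minus the green value. -/
import Mathlib


/-- Blue quadrance between two points. -/
def Qb {F : Type*} [Field F] (X Y : F × F) : F :=
  (Y.1 - X.1) ^ 2 + (Y.2 - X.2) ^ 2

/-- Red quadrance between two points. -/
def Qr {F : Type*} [Field F] (X Y : F × F) : F :=
  (Y.1 - X.1) ^ 2 - (Y.2 - X.2) ^ 2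

/-- Green quadrance between two points. -/
def Qg {F : Type*} [Field F] (X Y : F × F) : F :=
  2 * (Y.1 - X.1) * (Y.2 - X.2)

/-- Archimedes' function. -/
def archimedes {F : Type*} [Field F] (Q1 Q2 Q3 : F) : F :=
  (Q1 + Q2 + Q3) ^ 2 - 2 * (Q1 ^ 2 + Q2 ^ 2 + Q3 ^ 2)

/-- The blue value of Archimedes' function on the quadrances of a triangle
equals minus the red value and minus the green value. -/
theorem archimedes_three_colours {F : Type*} [Field F] (A1 A2 A3 : F × F) :
    archimedes (Qb A2 A3) (Qb A1 A3) (Qb A1 A2)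
        = -archimedes (Qr A2 A3) (Qr A1 A3) (Qr A1 A2)
      ∧ archimedes (Qb A2 A3) (Qb A1 A3) (Qb A1 A2)
        = -archimedes (Qg A2 A3) (Qg A1 A3) (Qg A1 A2) := by
  constructor <;> (simp only [Qb, Qr, Qg, archimedes]; ring)
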